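/- Let f be an orientation-preserving homeomorphism of the circle T = R/Z whose rotation number ρ(f) is rational, and assume that f is not topologically conjugate to a rotation. Then h_pol(f) = 1. -/

import Mathlib

open Filter Metric Set

variable {Z : Type*} [MetricSpace Z]

/-- The dynamical metric `d_n^f(x,y) = max_{0 ≤ k ≤ n-1} d(f^k x, f^k y)`. -/
noncomputable def dynDist (f : Z → Z) (n : ℕ) (x y : Z) : ℝ :=
  ((Finset.range n).sup fun k => nndist (f^[k] x) (f^[k] y) : NNReal)

/-- `G_n^f(Y,ε)`: the minimal number of balls of radius `ε` for the metric `d_n^f`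
needed to cover `Y`. -/
noncomputable def coverNum (f : Z → Z) (n : ℕ) (Y : Set Z) (ε : ℝ) : ℕ :=
  sInf {m : ℕ | ∃ s : Finset Z, s.card = m ∧
    Y ⊆ ⋃ c ∈ s, {y : Z | dynDist f n c y ≤ ε}}

/-- The polynomial entropy of `f` on `Y`:
`h_pol(f,Y) = lim_{ε→0} limsup_{n→∞} log G_n^f(Y,ε) / log n`
(realized, by antitonicity in `ε`, as the supremum over `ε > 0`). -/
noncomputable def hpolOn (f : Z → Z) (Y : Set Z) : EReal :=
  ⨆ ε : {e : ℝ // 0 < e}, Filter.atTop.limsup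
    (fun n : ℕ => ((Real.log (coverNum f n Y ε.1) / Real.log n : ℝ) : EReal))

/-- The polynomial entropy of `f`. -/
noncomputable def hpol (f : Z → Z) : EReal := hpolOn f Set.univ

/-- The circle `𝕋 = ℝ/ℤ`. -/
abbrev Circle1 : Type := AddCircle (1 : ℝ)

/-- `f` is topologically conjugate to a rotation of the circle. -/
def ConjRotCircle (f : Circle1 ≃ₜ Circle1) : Prop :=
  ∃ (h : Circle1 ≃ₜ Circle1) (a : Circle1), ∀ x : Circle1, h (f (h.symm x)) = x + a

lemma dynDist_nonneg {f : Z → Z} {n : ℕ} {x y : Z} : 0 ≤ dynDist f n x y :=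
  NNReal.coe_nonneg _

lemma dist_le_dynDist {f : Z → Z} {n k : ℕ} {x y : Z} (hk : k < n) :
    dist (f^[k] x) (f^[k] y) ≤ dynDist f n x y := by
  have h := Finset.le_sup (f := fun k => nndist (f^[k] x) (f^[k] y))
    (Finset.mem_range.2 hk)
  rw [dist_nndist]
  exact_mod_cast h

lemma dynDist_le_iff {f : Z → Z} {n : ℕ} {x y : Z} {ε : ℝ} (hε : 0 ≤ ε) :
    dynDist f n x y ≤ ε ↔ ∀ k < n, dist (f^[k] x) (f^[k] y) ≤ ε := by
  have base : dynDist f n x y ≤ ε ↔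
      ((Finset.range n).sup fun k => nndist (f^[k] x) (f^[k] y)) ≤ ε.toNNReal := by
    rw [dynDist, ← NNReal.coe_le_coe, Real.coe_toNNReal ε hε]
  rw [base, Finset.sup_le_iff]
  constructor
  · intro h k hk
    have := h k (Finset.mem_range.2 hk)
    rwa [← dist_le_coe, Real.coe_toNNReal ε hε] at this
  · intro h k hk
    rw [← dist_le_coe, Real.coe_toNNReal ε hε]
    exact h k (Finset.mem_range.1 hk)

lemma dynDist_comm {f : Z → Z} {n : ℕ} {x y : Z} :
    dynDist f n x y = dynDist f n y x := by
  unfold dynDist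
  congr 1
  exact Finset.sup_congr rfl fun k _ => nndist_comm _ _

lemma dynDist_triangle {f : Z → Z} {n : ℕ} (x y z : Z) :
    dynDist f n x z ≤ dynDist f n x y + dynDist f n y z := by
  rw [dynDist_le_iff (add_nonneg dynDist_nonneg dynDist_nonneg)]
  intro k hk
  calc dist (f^[k] x) (f^[k] z) ≤ dist (f^[k] x) (f^[k] y) + dist (f^[k] y) (f^[k] z) :=
        dist_triangle _ _ _
    _ ≤ dynDist f n x y + dynDist f n y z :=
        add_le_add (dist_le_dynDist hk) (dist_le_dynDist hk)

lemma dynDist_mono {f : Z → Z} {n m : ℕ} (h : n ≤ m) (x y : Z) :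
    dynDist f n x y ≤ dynDist f m x y := by
  have := Finset.sup_mono (f := fun k => nndist (f^[k] x) (f^[k] y))
    (Finset.range_subset_range.2 h)
  exact_mod_cast this

lemma coverNum_le_card {f : Z → Z} {n : ℕ} {Y : Set Z} {ε : ℝ} {s : Finset Z}
    (hs : Y ⊆ ⋃ c ∈ s, {y : Z | dynDist f n c y ≤ ε}) :
    coverNum f n Y ε ≤ s.card :=
  Nat.sInf_le ⟨s, rfl, hs⟩

/-- uniform continuity of the dynamical distance -/
lemma exists_delta_dynDist [CompactSpace Z] {f : Z → Z} (hf : Continuous f)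
    {ε : ℝ} (hε : 0 < ε) (n : ℕ) :
    ∃ δ > 0, ∀ x y : Z, dist x y < δ → dynDist f n x y ≤ ε := by
  induction n with
  | zero =>
    refine ⟨1, one_pos, fun x y _ => ?_⟩
    rw [dynDist_le_iff hε.le]
    intro k hk; exact absurd hk (Nat.not_lt_zero k)
  | succ n ih =>
    obtain ⟨δ₁, hδ₁, h₁⟩ := ih
    have hfn : UniformContinuous f^[n] :=
      CompactSpace.uniformContinuous_of_continuous (hf.iterate n)
    rw [Metric.uniformContinuous_iff] at hfn
    obtain ⟨δ₂, hδ₂, h₂⟩ := hfn ε hε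
    refine ⟨min δ₁ δ₂, lt_min hδ₁ hδ₂, fun x y hxy => ?_⟩
    rw [dynDist_le_iff hε.le]
    intro k hk
    rcases Nat.lt_succ_iff_lt_or_eq.1 hk with hk | rfl
    · exact le_trans (dist_le_dynDist hk) (h₁ x y (hxy.trans_le (min_le_left _ _)))
    · exact (h₂ (hxy.trans_le (min_le_right _ _))).le

lemma exists_cover [CompactSpace Z] {f : Z → Z} (hf : Continuous f)
    {ε : ℝ} (hε : 0 < ε) (n : ℕ) :
    ∃ s : Finset Z, (univ : Set Z) ⊆ ⋃ c ∈ s, {y : Z | dynDist f n c y ≤ ε} := by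
  obtain ⟨δ, hδ, hδ'⟩ := exists_delta_dynDist hf hε n
  have hcov : (univ : Set Z) ⊆ ⋃ x : Z, ball x δ := fun x _ =>
    mem_iUnion.2 ⟨x, mem_ball_self hδ⟩
  obtain ⟨t, ht⟩ := isCompact_univ.elim_finite_subcover (fun x : Z => ball x δ)
    (fun x => isOpen_ball) hcov
  refine ⟨t, ht.trans (iUnion₂_mono fun c _ => ?_)⟩
  intro y hy
  exact hδ' c y (mem_ball'.1 hy)

lemma coverNum_set_nonempty [CompactSpace Z] {f : Z → Z} (hf : Continuous f)
    {ε : ℝ} (hε : 0 < ε) (n : ℕ) :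
    {m : ℕ | ∃ s : Finset Z, s.card = m ∧
      (univ : Set Z) ⊆ ⋃ c ∈ s, {y : Z | dynDist f n c y ≤ ε}}.Nonempty := by
  obtain ⟨s, hs⟩ := exists_cover hf hε n
  exact ⟨s.card, s, rfl, hs⟩

lemma one_le_coverNum [CompactSpace Z] [Nonempty Z] {f : Z → Z} (hf : Continuous f)
    {ε : ℝ} (hε : 0 < ε) (n : ℕ) :
    1 ≤ coverNum f n univ ε := by
  obtain ⟨s, hcard, hcov⟩ := Nat.sInf_mem (coverNum_set_nonempty hf hε n)
  rw [Nat.one_le_iff_ne_zero]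
  intro h0
  rw [coverNum] at h0
  rw [h0] at hcard
  rw [Finset.card_eq_zero] at hcard
  subst hcard
  obtain ⟨z⟩ := ‹Nonempty Z›
  simpa using hcov (mem_univ z)

lemma coverNum_mono_n [CompactSpace Z] {f : Z → Z} (hf : Continuous f)
    {ε : ℝ} (hε : 0 < ε) {n m : ℕ} (h : n ≤ m) :
    coverNum f n univ ε ≤ coverNum f m univ ε := by
  obtain ⟨s, hcard, hcov⟩ := Nat.sInf_mem (coverNum_set_nonempty hf hε m)
  have : (univ : Set Z) ⊆ ⋃ c ∈ s, {y : Z | dynDist f n c y ≤ ε} := by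
    refine hcov.trans (iUnion₂_mono fun c _ y hy => ?_)
    exact le_trans (dynDist_mono h c y) hy
  calc coverNum f n univ ε ≤ s.card := coverNum_le_card this
    _ = coverNum f m univ ε := hcard

lemma card_le_coverNum [CompactSpace Z] {f : Z → Z} (hf : Continuous f)
    {ε : ℝ} (hε : 0 < ε) {n : ℕ} {T : Finset Z}
    (hT : ∀ x ∈ T, ∀ y ∈ T, x ≠ y → 2 * ε < dynDist f n x y) :
    T.card ≤ coverNum f n univ ε := by
  obtain ⟨s, hcard, hcov⟩ := Nat.sInf_mem (coverNum_set_nonempty hf hε n)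
  have hch : ∀ x : Z, ∃ cx : Z, x ∈ T → cx ∈ s ∧ dynDist f n cx x ≤ ε := by
    intro x
    by_cases hx : x ∈ T
    · have := hcov (mem_univ x)
      simp only [mem_iUnion, mem_setOf_eq, exists_prop] at this
      obtain ⟨cx, hc1, hc2⟩ := this
      exact ⟨cx, fun _ => ⟨hc1, hc2⟩⟩
    · exact ⟨x, fun h => absurd h hx⟩
  choose c hc using hch
  have hinj : Set.InjOn c T := by
    intro x hx y hy hxy
    by_contra hne
    have hsep := hT x hx y hy hne
    have h2 : dynDist f n x y ≤ 2 * ε := by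
      calc dynDist f n x y ≤ dynDist f n x (c x) + dynDist f n (c x) y :=
            dynDist_triangle _ _ _
        _ ≤ ε + ε := by
            refine add_le_add ?_ ?_
            · rw [dynDist_comm]; exact (hc x hx).2
            · rw [hxy]; exact (hc y hy).2
        _ = 2 * ε := by ring
    linarith
  calc T.card ≤ s.card := Finset.card_le_card_of_injOn c
        (fun a ha => (hc a ha).1) hinj
    _ = coverNum f n univ ε := hcard

lemma tendsto_log_nat_atTop : Tendsto (fun n : ℕ => Real.log n) atTop atTop :=
  Real.tendsto_log_atTop.comp tendsto_natCast_atTop_atTop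

lemma tendsto_shift (c : ℝ) :
    Tendsto (fun n : ℕ => (Real.log n + c) / Real.log n) atTop (nhds 1) := by
  have h0 : Tendsto (fun n : ℕ => c / Real.log n) atTop (nhds 0) :=
    Tendsto.div_atTop tendsto_const_nhds tendsto_log_nat_atTop
  have h1 : Tendsto (fun n : ℕ => 1 + c / Real.log n) atTop (nhds 1) := by
    simpa using tendsto_const_nhds.add h0
  refine h1.congr' ?_
  filter_upwards [eventually_ge_atTop 2] with n hn
  have hlog : Real.log n ≠ 0 := by
    have : (1:ℝ) < n := by exact_mod_cast Nat.lt_of_lt_of_le Nat.one_lt_two hn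
    exact ne_of_gt (Real.log_pos this)
  field_simp

lemma tendsto_shift_EReal (c : ℝ) :
    Tendsto (fun n : ℕ => (((Real.log n + c) / Real.log n : ℝ) : EReal)) atTop
      (nhds (1 : EReal)) := by
  have := (EReal.tendsto_coe (f := atTop)).2 (tendsto_shift c)
  simpa using this

lemma limsup_shift_EReal (c : ℝ) :
    Filter.atTop.limsup (fun n : ℕ => (((Real.log n + c) / Real.log n : ℝ) : EReal)) = 1 :=
  (tendsto_shift_EReal c).limsup_eq


lemma hpol_eq_one_of_bounds [CompactSpace Z] [Nonempty Z] (f : Z → Z) (hf : Continuous f)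
    (up : ∀ ε : ℝ, 0 < ε → ∃ C : ℕ, 1 ≤ C ∧ ∀ n : ℕ, coverNum f n univ ε ≤ C * (n + 1))
    (low : ∃ ε₀ : ℝ, 0 < ε₀ ∧ ∃ c : ℝ, 0 < c ∧
      ∀ᶠ n : ℕ in atTop, (n : ℝ) * c ≤ coverNum f n univ ε₀) :
    hpol f = 1 := by
  rw [hpol, hpolOn]
  apply le_antisymm
  · refine iSup_le fun ε => ?_
    obtain ⟨C, hC1, hC⟩ := up ε.1 ε.2
    have hbound : ∀ᶠ n : ℕ in atTop,
        ((Real.log (coverNum f n univ ε.1) / Real.log n : ℝ) : EReal)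
          ≤ (((Real.log n + Real.log (2 * C)) / Real.log n : ℝ) : EReal) := by
      filter_upwards [eventually_ge_atTop 2] with n hn
      rw [EReal.coe_le_coe_iff]
      have hlogn : 0 < Real.log n := Real.log_pos (by exact_mod_cast hn)
      have hpos : (0 : ℝ) < coverNum f n univ ε.1 := by
        exact_mod_cast one_le_coverNum hf ε.2 n
      have hle : (coverNum f n univ ε.1 : ℝ) ≤ 2 * C * n := by
        have := hC n
        have h2 : (coverNum f n univ ε.1 : ℝ) ≤ C * (n + 1) := by exact_mod_cast this
        have hn1 : (1:ℝ) ≤ n := by exact_mod_cast le_trans one_le_two hn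
        nlinarith [hn1, (show (1:ℝ) ≤ C by exact_mod_cast hC1)]
      have hlog : Real.log (coverNum f n univ ε.1) ≤ Real.log n + Real.log (2 * C) := by
        calc Real.log (coverNum f n univ ε.1) ≤ Real.log (2 * C * n) :=
              Real.log_le_log hpos hle
          _ = Real.log (2 * C) + Real.log n := by
              rw [Real.log_mul (by positivity) (by positivity)]
          _ = Real.log n + Real.log (2 * C) := by ring
      gcongr
    calc Filter.atTop.limsup _ ≤ Filter.atTop.limsup
          (fun n : ℕ => (((Real.log n + Real.log (2 * C)) / Real.log n : ℝ) : EReal)) :=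
          limsup_le_limsup hbound
      _ = 1 := limsup_shift_EReal _
  · obtain ⟨ε₀, hε₀, c, hc, hlow⟩ := low
    refine le_trans ?_ (le_iSup _ (⟨ε₀, hε₀⟩ : {e : ℝ // 0 < e}))
    have hbound : ∀ᶠ n : ℕ in atTop,
        (((Real.log n + Real.log c) / Real.log n : ℝ) : EReal)
          ≤ ((Real.log (coverNum f n univ ε₀) / Real.log n : ℝ) : EReal) := by
      filter_upwards [eventually_ge_atTop 2, hlow] with n hn hlown
      rw [EReal.coe_le_coe_iff]
      have hlogn : 0 < Real.log n := Real.log_pos (by exact_mod_cast hn)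
      have hnpos : (0:ℝ) < n := by positivity
      have hlog : Real.log n + Real.log c ≤ Real.log (coverNum f n univ ε₀) := by
        calc Real.log n + Real.log c = Real.log (n * c) :=
              (Real.log_mul (ne_of_gt hnpos) (ne_of_gt hc)).symm
          _ ≤ Real.log (coverNum f n univ ε₀) := Real.log_le_log (by positivity) hlown
      gcongr
    calc (1 : EReal) = Filter.atTop.limsup
          (fun n : ℕ => (((Real.log n + Real.log c) / Real.log n : ℝ) : EReal)) :=
          (limsup_shift_EReal _).symm
      _ ≤ _ := limsup_le_limsup hbound


lemma circle_coe_eq_iff (u v : ℝ) : (↑u : Circle1) = ↑v ↔ ∃ m : ℤ, u - v = m := by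
  rw [QuotientAddGroup.eq_iff_sub_mem, AddSubgroup.mem_zmultiples_iff]
  constructor
  · rintro ⟨m, hm⟩
    exact ⟨m, by simpa [zsmul_eq_mul] using hm.symm⟩
  · rintro ⟨m, hm⟩
    exact ⟨m, by simp [zsmul_eq_mul, hm]⟩

lemma circle_coe_add_int (u : ℝ) (m : ℤ) : ((u + m : ℝ) : Circle1) = ↑u :=
  (circle_coe_eq_iff _ _).2 ⟨m, by ring⟩

lemma circle_sub_coe (u v : ℝ) : (↑u : Circle1) - ↑v = ↑(u - v) :=
  (QuotientAddGroup.mk_sub _ u v).symm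

lemma circle_dist_eq (u v : ℝ) :
    dist (↑u : Circle1) ↑v = |(u - v) - round (u - v)| := by
  rw [dist_eq_norm, circle_sub_coe]
  have := AddCircle.norm_eq (p := (1:ℝ)) (x := u - v)
  simpa using this

lemma circle_dist_le (u v : ℝ) : dist (↑u : Circle1) ↑v ≤ |u - v| := by
  rw [circle_dist_eq]
  simpa using round_le (u - v) 0

lemma circle_dist_ge {u v δ D : ℝ} (h1 : δ ≤ |u - v|) (h2 : |u - v| ≤ D) (hD : D < 1) :
    min δ (1 - D) ≤ dist (↑u : Circle1) ↑v := by
  rw [circle_dist_eq]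
  set w := u - v with hw
  rcases eq_or_ne (round w) 0 with h0 | h0
  · rw [h0]
    simp only [Int.cast_zero, sub_zero]
    exact le_trans (min_le_left _ _) h1
  · have habs : (1:ℝ) ≤ |(round w : ℝ)| := by
      have := Int.one_le_abs h0
      calc (1:ℝ) = ((1:ℤ):ℝ) := by norm_num
        _ ≤ ((|round w| : ℤ) : ℝ) := by exact_mod_cast this
        _ = |(round w : ℝ)| := by push_cast; ring
    have : |(round w : ℝ)| - |w| ≤ |w - round w| := by
      have h := abs_sub_abs_le_abs_sub ((round w : ℤ) : ℝ) w
      rwa [abs_sub_comm ((round w : ℤ) : ℝ) w] at h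
    refine le_trans (min_le_right _ _) ?_
    linarith
lemma lift_iterate (f : Circle1 ≃ₜ Circle1) (F : ℝ → ℝ)
    (hFlift : ∀ x : ℝ, f ((x : ℝ) : Circle1) = ((F x : ℝ) : Circle1)) :
    ∀ (n : ℕ) (x : ℝ), (⇑f)^[n] ((x : ℝ) : Circle1) = ((F^[n] x : ℝ) : Circle1) := by
  intro n
  induction n with
  | zero => intro x; simp
  | succ n ih =>
    intro x
    rw [Function.iterate_succ_apply, Function.iterate_succ_apply, hFlift, ih]

lemma lift_add_one_eq (f : Circle1 ≃ₜ Circle1) (F : ℝ → ℝ)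
    (hFcont : Continuous F) (hFmono : StrictMono F)
    (hFlift : ∀ x : ℝ, f ((x : ℝ) : Circle1) = ((F x : ℝ) : Circle1))
    (ρ : ℝ)
    (hρ : ∀ x : ℝ, Filter.Tendsto (fun n : ℕ => F^[n] x / n) Filter.atTop (nhds ρ)) :
    ∀ x : ℝ, F (x + 1) = F x + 1 := by
  have hint : ∀ x : ℝ, ∃ m : ℤ, F (x + 1) - F x = m := by
    intro x
    have h1 : ((x + 1 : ℝ) : Circle1) = ↑x := by
      have := circle_coe_add_int x 1
      simpa using this
    have h2 : ((F (x + 1) : ℝ) : Circle1) = ↑(F x) := by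
      rw [← hFlift, ← hFlift, h1]
    exact (circle_coe_eq_iff _ _).1 h2
  set φ := fun t : ℝ => F (t + 1) - F t with hφ
  have hφc : Continuous φ := (hFcont.comp (continuous_id.add continuous_const)).sub hFcont
  have key : ∀ u v : ℝ, φ u < φ v → False := by
    intro u v huv
    obtain ⟨mu, hmu⟩ := hint u
    obtain ⟨mv, hmv⟩ := hint v
    have hmuv : (mu : ℝ) < mv := by rw [← hmu, ← hmv]; exact huv
    have hmuv' : mu + 1 ≤ mv := by exact_mod_cast Int.lt_iff_add_one_le.1 (by exact_mod_cast hmuv)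
    have hmem : (mu : ℝ) + 1/2 ∈ Set.uIcc (φ u) (φ v) := by
      apply Set.Icc_subset_uIcc
      simp only [hφ, Set.mem_Icc]
      constructor
      · rw [hmu]; linarith
      · rw [hmv]
        have : (mu:ℝ) + 1 ≤ (mv:ℝ) := by exact_mod_cast hmuv'
        linarith
    obtain ⟨t, _, ht⟩ := intermediate_value_uIcc (hφc.continuousOn) hmem
    obtain ⟨mt, hmt⟩ := hint t
    have : (mt : ℝ) = mu + 1/2 := by rw [← hmt]; exact ht
    have h2 : ((mt - mu : ℤ) : ℝ) = 1/2 := by push_cast; linarith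
    rcases le_or_gt (mt - mu) 0 with h | h
    · have : ((mt - mu : ℤ) : ℝ) ≤ 0 := by exact_mod_cast h
      linarith
    · have : (1:ℝ) ≤ ((mt - mu : ℤ) : ℝ) := by exact_mod_cast h
      linarith
  have hconst : ∀ x : ℝ, φ x = φ 0 := by
    intro x
    rcases lt_trichotomy (φ x) (φ 0) with h | h | h
    · exact absurd h (fun h => key _ _ h)
    · exact h
    · exact absurd h (fun h => key _ _ h)
  obtain ⟨c, hc⟩ := hint 0
  have hφx : ∀ x : ℝ, F (x + 1) = F x + c := by
    intro x
    have := hconst x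
    have h0 : φ 0 = c := hc
    have hx : φ x = c := by rw [this, h0]
    have : F (x + 1) - F x = c := hx
    linarith
  have hcpos : 0 < c := by
    have h : F 0 < F (0 + 1) := hFmono (by linarith)
    rw [hφx 0] at h
    exact_mod_cast (by linarith : (0:ℝ) < (c:ℝ))
  -- now show c = 1
  set cn := c.toNat with hcn
  have hcnc : (cn : ℝ) = (c : ℝ) := by
    rw [hcn]
    exact_mod_cast Int.toNat_of_nonneg hcpos.le
  have hcn1 : 1 ≤ cn := by omega
  -- F (x + j) = F x + j * c for j : ℕ
  have haddj : ∀ (j : ℕ) (x : ℝ), F (x + j) = F x + j * cn := by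
    intro j
    induction j with
    | zero => intro x; simp
    | succ j ih =>
      intro x
      have : (x + (j + 1 : ℕ) : ℝ) = (x + j) + 1 := by push_cast; ring
      rw [this, hφx, ih]
      push_cast
      rw [hcnc]
      ring
  have hiter : ∀ (n : ℕ) (x : ℝ) (j : ℕ), F^[n] (x + j) = F^[n] x + (j * cn ^ n : ℕ) := by
    intro n
    induction n with
    | zero => intro x j; simp
    | succ n ih =>
      intro x j
      rw [Function.iterate_succ_apply, Function.iterate_succ_apply]
      have h1 : F (x + j) = F x + (j * cn : ℕ) := by
        rw [haddj j x]; push_cast; ring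
      rw [h1, ih (F x) (j * cn)]
      congr 1
      push_cast
      ring
  -- cn = 1
  have hcnle : cn ≤ 1 := by
    by_contra hge
    push_neg at hge
    have h2 : 2 ≤ cn := hge
    have hdiff : Tendsto (fun n : ℕ => F^[n] 1 / n - F^[n] 0 / n) atTop (nhds 0) := by
      simpa using (hρ 1).sub (hρ 0)
    have hev : ∀ᶠ n : ℕ in atTop, (1:ℝ) ≤ F^[n] 1 / n - F^[n] 0 / n := by
      filter_upwards [eventually_ge_atTop 1] with n hn
      have h1 : F^[n] (1 : ℝ) = F^[n] 0 + (cn ^ n : ℕ) := by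
        have := hiter n 0 1
        simpa using this
      have hnpos : (0:ℝ) < n := by exact_mod_cast hn
      rw [h1]
      have hpow : (n : ℝ) ≤ (cn ^ n : ℕ) := by
        exact_mod_cast (Nat.lt_pow_self h2 : n < cn ^ n).le
      calc (1:ℝ) ≤ (cn ^ n : ℕ) / n := (one_le_div hnpos).2 hpow
        _ = (F^[n] 0 + (cn ^ n : ℕ)) / n - F^[n] 0 / n := by field_simp; ring
        _ = _ := by ring
    have := ge_of_tendsto hdiff hev
    linarith
  have : cn = 1 := le_antisymm hcnle hcn1
  intro x
  rw [hφx x, ← hcnc, this]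
  norm_num

lemma map_add_int {F : ℝ → ℝ} (hF1 : ∀ x : ℝ, F (x + 1) = F x + 1) :
    ∀ (m : ℤ) (x : ℝ), F (x + m) = F x + m := by
  have hsub : ∀ x : ℝ, F (x - 1) = F x - 1 := by
    intro x
    have := hF1 (x - 1)
    simp only [sub_add_cancel] at this
    linarith
  intro m
  induction m using Int.induction_on with
  | zero => intro x; simp
  | succ k ih =>
    intro x
    have h1 : (x + ((k + 1 : ℤ) : ℝ)) = (x + ((k : ℤ) : ℝ)) + 1 := by push_cast; ring
    rw [h1, hF1, ih]
    push_cast; ring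
  | pred k ih =>
    intro x
    have h1 : (x + ((-k - 1 : ℤ) : ℝ)) = (x + ((-k : ℤ) : ℝ)) - 1 := by push_cast; ring
    rw [h1, hsub, ih]
    push_cast; ring

lemma surjective_of_lift {F : ℝ → ℝ} (hFcont : Continuous F) (hFmono : StrictMono F)
    (hF1 : ∀ x : ℝ, F (x + 1) = F x + 1) : Function.Surjective F := by
  have hup : Tendsto F atTop atTop := by
    apply tendsto_atTop_mono (f := fun x : ℝ => x + (F 0 - 1))
    · intro x
      have h1 : F (0 + (⌊x⌋ : ℤ)) = F 0 + ⌊x⌋ := map_add_int hF1 ⌊x⌋ 0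
      have h2 : F (0 + (⌊x⌋ : ℤ) : ℝ) ≤ F x := by
        apply hFmono.monotone
        simp only [zero_add]
        exact_mod_cast Int.floor_le x
      have h3 : (x:ℝ) - 1 < (⌊x⌋ : ℝ) := Int.sub_one_lt_floor x
      rw [h1] at h2
      linarith
    · exact tendsto_atTop_add_const_right _ _ tendsto_id
  have hdown : Tendsto F atBot atBot := by
    apply tendsto_atBot_mono (f := fun x : ℝ => x + (F 0 + 1))
    · intro x
      have h1 : F (0 + (⌈x⌉ : ℤ)) = F 0 + ⌈x⌉ := map_add_int hF1 ⌈x⌉ 0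
      have h2 : F x ≤ F (0 + (⌈x⌉ : ℤ) : ℝ) := by
        apply hFmono.monotone
        simp only [zero_add]
        exact_mod_cast Int.le_ceil x
      have h3 : (⌈x⌉ : ℝ) < x + 1 := Int.ceil_lt_add_one x
      rw [h1] at h2
      linarith
    · exact tendsto_atBot_add_const_right _ _ tendsto_id
  exact hFcont.surjective hup hdown


lemma iterate_add_one {F : ℝ → ℝ} (hF1 : ∀ x : ℝ, F (x + 1) = F x + 1) :
    ∀ (k : ℕ) (x : ℝ), F^[k] (x + 1) = F^[k] x + 1 := by
  intro k
  induction k with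
  | zero => intro x; simp
  | succ k ih =>
    intro x
    rw [Function.iterate_succ_apply, hF1, ih, Function.iterate_succ_apply]

lemma iterate_G_eq {F : ℝ → ℝ} (hF1 : ∀ x : ℝ, F (x + 1) = F x + 1) (p : ℤ) (q : ℕ) :
    ∀ (n : ℕ) (x : ℝ), (fun y : ℝ => F^[q] y - p)^[n] x = F^[q * n] x - n * p := by
  set G := fun y : ℝ => F^[q] y - (p:ℝ) with hG
  have hG1 : ∀ x : ℝ, G (x + 1) = G x + 1 := by
    intro x
    simp only [hG, iterate_add_one hF1 q x]
    ring
  intro n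
  induction n with
  | zero => intro x; simp
  | succ n ih =>
    intro x
    rw [Function.iterate_succ_apply', ih]
    have h1 : G (F^[q * n] x - (n * p : ℝ)) = G (F^[q * n] x) - n * p := by
      have h := map_add_int hG1 (-(n * p)) (F^[q * n] x)
      push_cast at h
      calc G (F^[q * n] x - (n * p : ℝ)) = G (F^[q * n] x + -(n * p : ℝ)) := by ring_nf
        _ = G (F^[q * n] x) - n * p := by rw [h]; ring
    rw [h1]
    have h2 : G (F^[q * n] x) = F^[q * (n + 1)] x - p := by
      simp only [hG]
      have : q * (n + 1) = q + q * n := by ring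
      rw [this, Function.iterate_add_apply]
    rw [h2]
    push_cast
    ring

/-- existence of a fixed point for the lift of the q-th iterate -/
lemma exists_fixed_point {F : ℝ → ℝ} (hFcont : Continuous F)
    (hF1 : ∀ x : ℝ, F (x + 1) = F x + 1) {ρ : ℝ}
    (hρ : ∀ x : ℝ, Filter.Tendsto (fun n : ℕ => F^[n] x / n) Filter.atTop (nhds ρ))
    {p : ℤ} {q : ℕ} (hq : 0 < q) (hpq : ρ = (p : ℝ) / q) :
    ∃ a : ℝ, F^[q] a = a + p := by
  by_contra hno
  push_neg at hno
  set ψ := fun x : ℝ => F^[q] x - p - x with hψdef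
  have hψcont : Continuous ψ := ((hFcont.iterate q).sub continuous_const).sub continuous_id
  have hψne : ∀ x : ℝ, ψ x ≠ 0 := by
    intro x hx
    exact hno x (by simp only [hψdef] at hx; linarith)
  have hψper : ∀ (m : ℤ) (x : ℝ), ψ (x + m) = ψ x := by
    intro m x
    have h1 : F^[q] (x + m) = F^[q] x + m := map_add_int (iterate_add_one hF1 q) m x
    simp only [hψdef, h1]
    ring
  -- the sign of ψ is constant
  have hsign : (∀ x : ℝ, 0 < ψ x) ∨ (∀ x : ℝ, ψ x < 0) := by
    rcases lt_or_gt_of_ne (hψne 0) with h0 | h0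
    · right
      intro x
      rcases lt_or_gt_of_ne (hψne x) with hx | hx
      · exact hx
      · exfalso
        have hmem : (0:ℝ) ∈ Set.uIcc (ψ 0) (ψ x) := Set.Icc_subset_uIcc ⟨h0.le, hx.le⟩
        obtain ⟨t, _, ht⟩ := intermediate_value_uIcc hψcont.continuousOn hmem
        exact hψne t ht
    · left
      intro x
      rcases lt_or_gt_of_ne (hψne x) with hx | hx
      · exfalso
        have hmem : (0:ℝ) ∈ Set.uIcc (ψ x) (ψ 0) := Set.Icc_subset_uIcc ⟨hx.le, h0.le⟩
        obtain ⟨t, _, ht⟩ := intermediate_value_uIcc hψcont.continuousOn hmem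
        exact hψne t ht
      · exact hx
  -- reduce any point into [0,1]
  have hred : ∀ x : ℝ, ∃ y ∈ Set.Icc (0:ℝ) 1, ψ x = ψ y := by
    intro x
    refine ⟨Int.fract x, ⟨Int.fract_nonneg x, (Int.fract_lt_one x).le⟩, ?_⟩
    conv_lhs => rw [show x = Int.fract x + (⌊x⌋ : ℤ) by rw [Int.fract]; push_cast; ring]
    rw [hψper]
  have hGn : ∀ (n : ℕ) (x : ℝ), (fun y : ℝ => F^[q] y - p)^[n] x = F^[q * n] x - n * p :=
    iterate_G_eq hF1 p q
  have hqn : Tendsto (fun n : ℕ => F^[q * n] 0 / (q * n : ℕ)) atTop (nhds ρ) := by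
    exact (hρ 0).comp (tendsto_atTop_mono (fun n => Nat.le_mul_of_pos_left n hq) tendsto_id)
  rcases hsign with hpos | hneg
  · -- minimum of ψ on [0,1]
    obtain ⟨x₀, hx₀, hmin⟩ := isCompact_Icc.exists_isMinOn (Set.nonempty_Icc.2 zero_le_one)
      hψcont.continuousOn
    set δ := ψ x₀ with hδ
    have hδpos : 0 < δ := hpos x₀
    have hlb : ∀ x : ℝ, δ ≤ ψ x := by
      intro x
      obtain ⟨y, hy, hxy⟩ := hred x
      rw [hxy]
      exact hmin hy
    have hGrow : ∀ n : ℕ, n * δ ≤ (fun y : ℝ => F^[q] y - p)^[n] 0 := by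
      intro n
      induction n with
      | zero => simp
      | succ n ih =>
        rw [Function.iterate_succ_apply']
        have := hlb ((fun y : ℝ => F^[q] y - p)^[n] 0)
        simp only [hψdef] at this
        push_cast
        nlinarith [this, ih]
    have hev : ∀ᶠ n : ℕ in atTop, ρ + δ / q ≤ F^[q * n] 0 / (q * n : ℕ) := by
      filter_upwards [eventually_ge_atTop 1] with n hn
      have h1 := hGrow n
      rw [hGn n 0] at h1
      have hnpos : (0:ℝ) < n := by exact_mod_cast hn
      have hqpos : (0:ℝ) < q := by exact_mod_cast hq
      have hcast : ((q * n : ℕ) : ℝ) = (q:ℝ) * n := by push_cast; ring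
      rw [hcast, hpq]
      rw [← add_div, div_le_div_iff₀ (by positivity) (by positivity)]
      nlinarith [h1]
    have := ge_of_tendsto hqn hev
    have hqpos : (0:ℝ) < q := by exact_mod_cast hq
    have : δ / q ≤ 0 := by linarith
    nlinarith [hδpos, hqpos, div_pos hδpos hqpos]
  · obtain ⟨x₀, hx₀, hmax⟩ := isCompact_Icc.exists_isMaxOn (Set.nonempty_Icc.2 zero_le_one)
      hψcont.continuousOn
    set δ := ψ x₀ with hδ
    have hδneg : δ < 0 := hneg x₀
    have hub : ∀ x : ℝ, ψ x ≤ δ := by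
      intro x
      obtain ⟨y, hy, hxy⟩ := hred x
      rw [hxy]
      exact hmax hy
    have hGrow : ∀ n : ℕ, (fun y : ℝ => F^[q] y - p)^[n] 0 ≤ n * δ := by
      intro n
      induction n with
      | zero => simp
      | succ n ih =>
        rw [Function.iterate_succ_apply']
        have := hub ((fun y : ℝ => F^[q] y - p)^[n] 0)
        simp only [hψdef] at this
        push_cast
        nlinarith [this, ih]
    have hev : ∀ᶠ n : ℕ in atTop, F^[q * n] 0 / (q * n : ℕ) ≤ ρ + δ / q := by
      filter_upwards [eventually_ge_atTop 1] with n hn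
      have h1 := hGrow n
      rw [hGn n 0] at h1
      have hnpos : (0:ℝ) < n := by exact_mod_cast hn
      have hqpos : (0:ℝ) < q := by exact_mod_cast hq
      have hcast : ((q * n : ℕ) : ℝ) = (q:ℝ) * n := by push_cast; ring
      rw [hcast, hpq]
      rw [← add_div, div_le_div_iff₀ (by positivity) (by positivity)]
      nlinarith [h1]
    have := le_of_tendsto hqn hev
    have hqpos : (0:ℝ) < q := by exact_mod_cast hq
    nlinarith [hδneg, hqpos, div_neg_of_neg_of_pos hδneg hqpos]

lemma conj_of_periodic (f : Circle1 ≃ₜ Circle1) (F : ℝ → ℝ)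
    (hFcont : Continuous F) (hFmono : StrictMono F)
    (hFlift : ∀ x : ℝ, f ((x : ℝ) : Circle1) = ((F x : ℝ) : Circle1))
    (hF1 : ∀ x : ℝ, F (x + 1) = F x + 1) {p : ℤ} {q : ℕ} (hq : 0 < q)
    (hper : ∀ x : ℝ, F^[q] x = x + p) : ConjRotCircle f := by
  haveI : Fact ((0:ℝ) < 1) := ⟨one_pos⟩
  set r : ℝ := (p : ℝ) / q with hr
  set H : ℝ → ℝ := fun x => (∑ k ∈ Finset.range q, (F^[k] x - k * r)) / q with hH
  have hqR : (0:ℝ) < q := by exact_mod_cast hq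
  have hHmono : StrictMono H := by
    intro x y hxy
    apply div_lt_div_of_pos_right ?_ hqR
    apply Finset.sum_lt_sum_of_nonempty (Finset.nonempty_range_iff.2 (by omega))
    intro k _
    have := (hFmono.iterate k) hxy
    linarith
  have hHcont : Continuous H := by
    apply Continuous.div_const
    apply continuous_finset_sum
    intro k _
    exact (hFcont.iterate k).sub continuous_const
  have hH1 : ∀ x : ℝ, H (x + 1) = H x + 1 := by
    intro x
    have hterm : ∀ k ∈ Finset.range q, F^[k] (x + 1) - k * r = (F^[k] x - k * r) + 1 := by
      intro k _
      rw [iterate_add_one hF1 k x]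
      ring
    simp only [hH]
    rw [Finset.sum_congr rfl hterm, Finset.sum_add_distrib, Finset.sum_const,
      Finset.card_range, nsmul_eq_mul, mul_one]
    rw [add_div, div_self (ne_of_gt hqR)]
  have hHF : ∀ x : ℝ, H (F x) = H x + r := by
    intro x
    have key : ∑ k ∈ Finset.range q, F^[k] (F x)
        = (∑ k ∈ Finset.range q, F^[k] x) + p := by
      have h1 : ∀ k ∈ Finset.range q, F^[k] (F x) = F^[k + 1] x := by
        intro k _
        exact (Function.iterate_succ_apply F k x).symm
      rw [Finset.sum_congr rfl h1]
      have h2 := Finset.sum_range_succ' (fun k => F^[k] x) q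
      have h3 := Finset.sum_range_succ (fun k => F^[k] x) q
      have h4 : F^[0] x = x := rfl
      have h5 : F^[q] x = x + p := hper x
      rw [h5] at h3
      rw [h4] at h2
      linarith
    have e1 : ∑ k ∈ Finset.range q, (F^[k] (F x) - k * r)
        = (∑ k ∈ Finset.range q, (F^[k] x - k * r)) + p := by
      rw [Finset.sum_sub_distrib, Finset.sum_sub_distrib, key]
      ring
    simp only [hH]
    rw [e1, add_div, hr]
  have hHsurj : Function.Surjective H := surjective_of_lift hHcont hHmono hH1
  set Hiso : ℝ ≃o ℝ := StrictMono.orderIsoOfSurjective H hHmono hHsurj with hHiso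
  have hHisoc : ⇑Hiso = H := StrictMono.coe_orderIsoOfSurjective H hHmono hHsurj
  set Hinv : ℝ → ℝ := ⇑Hiso.symm with hHinv
  have hHinvH : ∀ x : ℝ, Hinv (H x) = x := by
    intro x
    rw [hHinv, ← hHisoc]
    exact Hiso.symm_apply_apply x
  have hHHinv : ∀ x : ℝ, H (Hinv x) = x := by
    intro x
    have := Hiso.apply_symm_apply x
    rwa [hHisoc] at this
  have hHinv1 : ∀ x : ℝ, Hinv (x + 1) = Hinv x + 1 := by
    intro x
    apply hHmono.injective
    rw [hHHinv, hH1, hHHinv]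
  have hHinvcont : Continuous Hinv := (Hiso.symm.toHomeomorph).continuous
  -- circle maps
  set h0 : Circle1 → Circle1 := AddCircle.liftIco 1 0 (fun x => ((H x : ℝ) : Circle1))
    with hh0
  set h1 : Circle1 → Circle1 := AddCircle.liftIco 1 0 (fun x => ((Hinv x : ℝ) : Circle1))
    with hh1
  have hkey : ∀ (G : ℝ → ℝ), (∀ y : ℝ, G (y + 1) = G y + 1) → ∀ x : ℝ,
      AddCircle.liftIco 1 0 (fun y => ((G y : ℝ) : Circle1)) ((x : ℝ) : Circle1)
        = ((G x : ℝ) : Circle1) := by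
    intro G hG1 x
    have hx : x = Int.fract x + (⌊x⌋ : ℤ) := by
      have := Int.fract_add_floor x
      linarith
    have hc : ((x : ℝ) : Circle1) = ((Int.fract x : ℝ) : Circle1) := by
      conv_lhs => rw [hx]
      exact circle_coe_add_int _ _
    have hmem : Int.fract x ∈ Set.Ico (0:ℝ) (0 + 1) := by
      constructor
      · exact Int.fract_nonneg x
      · rw [zero_add]; exact Int.fract_lt_one x
    rw [hc, AddCircle.liftIco_coe_apply hmem]
    have hGx : G x = G (Int.fract x) + (⌊x⌋ : ℤ) := by
      conv_lhs => rw [hx]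
      exact map_add_int hG1 ⌊x⌋ (Int.fract x)
    rw [hGx, circle_coe_add_int]
  have hk0 : ∀ x : ℝ, h0 ((x : ℝ) : Circle1) = ((H x : ℝ) : Circle1) := hkey H hH1
  have hk1 : ∀ x : ℝ, h1 ((x : ℝ) : Circle1) = ((Hinv x : ℝ) : Circle1) := hkey Hinv hHinv1
  have hcsurj : ∀ z : Circle1, ∃ x : ℝ, z = ((x : ℝ) : Circle1) := by
    intro z
    obtain ⟨x, hx⟩ := QuotientAddGroup.mk_surjective z
    exact ⟨x, hx.symm⟩
  have hcont0 : Continuous h0 := by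
    rw [hh0]
    apply AddCircle.liftIco_continuous
    · show ((H 0 : ℝ) : Circle1) = ((H (0 + 1) : ℝ) : Circle1)
      rw [hH1 0]
      have hca := circle_coe_add_int (H 0) 1
      simp only [Int.cast_one] at hca
      exact hca.symm
    · exact (((AddCircle.continuous_mk' (1:ℝ))).comp hHcont).continuousOn
  have hcont1 : Continuous h1 := by
    rw [hh1]
    apply AddCircle.liftIco_continuous
    · show ((Hinv 0 : ℝ) : Circle1) = ((Hinv (0 + 1) : ℝ) : Circle1)
      rw [hHinv1 0]
      have hca := circle_coe_add_int (Hinv 0) 1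
      simp only [Int.cast_one] at hca
      exact hca.symm
    · exact (((AddCircle.continuous_mk' (1:ℝ))).comp hHinvcont).continuousOn
  set E : Circle1 ≃ Circle1 :=
    { toFun := h0
      invFun := h1
      left_inv := by
        intro z
        obtain ⟨x, rfl⟩ := hcsurj z
        rw [hk0, hk1, hHinvH]
      right_inv := by
        intro z
        obtain ⟨x, rfl⟩ := hcsurj z
        rw [hk1, hk0, hHHinv] } with hE
  set hhom : Circle1 ≃ₜ Circle1 := Homeomorph.mk E hcont0 hcont1 with hhom'
  refine ⟨hhom, ((r : ℝ) : Circle1), ?_⟩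
  intro z
  obtain ⟨x, rfl⟩ := hcsurj z
  have hsymm : hhom.symm ((x : ℝ) : Circle1) = ((Hinv x : ℝ) : Circle1) := hk1 x
  rw [hsymm, hFlift, ]
  show h0 _ = _
  rw [hk0, hHF, hHHinv]
  exact QuotientAddGroup.mk_add _ x r

lemma exists_orbit_sep (G : ℝ → ℝ) (hGcont : Continuous G) (Giso : ℝ ≃o ℝ)
    (hGiso : ∀ x : ℝ, Giso x = G x)
    (hG1 : ∀ x : ℝ, G (x + 1) = G x + 1) (a b : ℝ) (ha : G a = a) (hb : G b ≠ b) :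
    ∃ (y : ℕ → ℝ) (δ D : ℝ), 0 < δ ∧ D < 1 ∧ y 0 = b ∧
      (∀ k : ℕ, G (y (k + 1)) = y k) ∧
      (∀ k : ℕ, 1 ≤ k → δ ≤ |b - y k| ∧ |b - y k| ≤ D) := by
  have hGmono : StrictMono G := by
    have := Giso.strictMono
    intro x y h
    rw [← hGiso, ← hGiso]
    exact this h
  have hGsymm : ∀ t : ℝ, G (Giso.symm t) = t := by
    intro t
    rw [← hGiso]
    exact Giso.apply_symm_apply t
  set y : ℕ → ℝ := fun k => (⇑Giso.symm)^[k] b with hy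
  have hy0 : y 0 = b := rfl
  have hystep : ∀ k : ℕ, y (k + 1) = Giso.symm (y k) := by
    intro k
    rw [hy]
    exact Function.iterate_succ_apply' _ k b
  have hyG : ∀ k : ℕ, G (y (k + 1)) = y k := by
    intro k
    rw [hystep, hGsymm]
  have hψcont : Continuous fun t : ℝ => G t - t := hGcont.sub continuous_id
  rcases lt_or_gt_of_ne hb with hblt | hbgt
  · -- G b < b : orbit increases towards the fixed point L above b
    set β : ℝ := a + ⌈b - a⌉ with hβ
    have hβfix : G β = β := by
      rw [hβ, map_add_int hG1 ⌈b - a⌉ a, ha]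
    have hbβ : b ≤ β := by
      have := Int.le_ceil (b - a)
      rw [hβ]; linarith
    have hβb1 : β < b + 1 := by
      have := Int.ceil_lt_add_one (b - a)
      rw [hβ]; linarith
    set S : Set ℝ := {x | x ∈ Icc b β ∧ G x = x} with hS
    have hSclosed : IsClosed S :=
      IsClosed.inter isClosed_Icc (isClosed_eq hGcont continuous_id)
    have hSne : S.Nonempty := ⟨β, ⟨hbβ, le_refl β⟩, hβfix⟩
    have hSbdd : BddBelow S := ⟨b, fun x hx => hx.1.1⟩
    set L : ℝ := sInf S with hL
    have hLS : L ∈ S := hSclosed.csInf_mem hSne hSbdd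
    have hLfix : G L = L := hLS.2
    have hbL : b ≤ L := hLS.1.1
    have hLβ : L ≤ β := hLS.1.2
    have hbLlt : b < L := lt_of_le_of_ne hbL (fun h => hb (h ▸ hLfix))
    have hneg : ∀ x ∈ Ico b L, G x < x := by
      intro x hx
      by_contra hge
      push_neg at hge
      have hne : G x ≠ x := by
        intro heq
        have hxS : x ∈ S := ⟨⟨hx.1, le_trans hx.2.le hLβ⟩, heq⟩
        exact absurd (csInf_le hSbdd hxS) (not_le.2 hx.2)
      have hgt : x < G x := lt_of_le_of_ne hge (Ne.symm hne)
      have hmem : (0:ℝ) ∈ Icc (G b - b) (G x - x) := ⟨by linarith, by linarith⟩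
      obtain ⟨t, ht, ht0⟩ := intermediate_value_Icc hx.1 hψcont.continuousOn hmem
      have htfix : G t = t := by
        have := sub_eq_zero.1 ht0
        exact this
      have htS : t ∈ S := ⟨⟨ht.1, le_trans ht.2 (le_trans hx.2.le hLβ)⟩, htfix⟩
      have := csInf_le hSbdd htS
      have : L ≤ x := le_trans this ht.2
      exact absurd this (not_le.2 hx.2)
    have hstep : ∀ x ∈ Ico b L, Giso.symm x ∈ Ioo x L := by
      intro x hx
      set s := Giso.symm x with hs
      have hGs : G s = x := hGsymm x
      have hsb : b ≤ s := by
        by_contra hlt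
        push_neg at hlt
        have : G s < G b := hGmono hlt
        rw [hGs] at this
        linarith [hx.1]
      have hsL : s < L := by
        by_contra hge
        push_neg at hge
        have : G L ≤ G s := hGmono.monotone hge
        rw [hGs, hLfix] at this
        exact absurd this (not_le.2 hx.2)
      have hxs : x < s := by
        by_contra hle
        push_neg at hle
        have hsIco : s ∈ Ico b L := ⟨hsb, hsL⟩
        have := hneg s hsIco
        rw [hGs] at this
        linarith
      exact ⟨hxs, hsL⟩
    have hy_mem : ∀ k : ℕ, y k ∈ Ico b L := by
      intro k
      induction k with
      | zero => exact ⟨le_refl b, hbLlt⟩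
      | succ k ih =>
        rw [hystep]
        have := hstep (y k) ih
        exact ⟨le_trans ih.1 this.1.le, this.2⟩
    have hy_inc : ∀ k : ℕ, y k < y (k + 1) := by
      intro k
      rw [hystep]
      exact (hstep (y k) (hy_mem k)).1
    have hymono : StrictMono y := strictMono_nat_of_lt_succ hy_inc
    refine ⟨y, y 1 - b, L - b, ?_, ?_, hy0, hyG, ?_⟩
    · have := hy_inc 0
      rw [hy0] at this
      linarith
    · linarith
    · intro k hk
      have h1 : y 1 ≤ y k := hymono.monotone hk
      have h2 : y k < L := (hy_mem k).2
      have h0 : b < y 1 := by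
        have := hy_inc 0; rw [hy0] at this; exact this
      have habs : |b - y k| = y k - b := by
        rw [abs_sub_comm, abs_of_nonneg (by linarith)]
      rw [habs]
      constructor <;> linarith
  · -- G b > b : orbit decreases towards the fixed point L below b
    set α : ℝ := a + ⌊b - a⌋ with hα
    have hαfix : G α = α := by
      rw [hα, map_add_int hG1 ⌊b - a⌋ a, ha]
    have hαb : α ≤ b := by
      have := Int.floor_le (b - a)
      rw [hα]; linarith
    have hbα1 : b < α + 1 := by
      have := Int.lt_floor_add_one (b - a)
      rw [hα]; linarith
    set S : Set ℝ := {x | x ∈ Icc α b ∧ G x = x} with hS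
    have hSclosed : IsClosed S :=
      IsClosed.inter isClosed_Icc (isClosed_eq hGcont continuous_id)
    have hSne : S.Nonempty := ⟨α, ⟨le_refl α, hαb⟩, hαfix⟩
    have hSbdd : BddAbove S := ⟨b, fun x hx => hx.1.2⟩
    set L : ℝ := sSup S with hL
    have hLS : L ∈ S := hSclosed.csSup_mem hSne hSbdd
    have hLfix : G L = L := hLS.2
    have hLb : L ≤ b := hLS.1.2
    have hαL : α ≤ L := hLS.1.1
    have hLblt : L < b := lt_of_le_of_ne hLb (fun h => hb (h ▸ hLfix))
    have hpos : ∀ x ∈ Ioc L b, x < G x := by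
      intro x hx
      by_contra hge
      push_neg at hge
      have hne : G x ≠ x := by
        intro heq
        have hxS : x ∈ S := ⟨⟨le_trans hαL hx.1.le, hx.2⟩, heq⟩
        exact absurd (le_csSup hSbdd hxS) (not_le.2 hx.1)
      have hlt : G x < x := lt_of_le_of_ne hge hne
      have hmem : (0:ℝ) ∈ Icc (G x - x) (G b - b) := ⟨by linarith, by linarith⟩
      obtain ⟨t, ht, ht0⟩ := intermediate_value_Icc hx.2 hψcont.continuousOn hmem
      have htfix : G t = t := sub_eq_zero.1 ht0
      have htS : t ∈ S := ⟨⟨le_trans hαL (le_trans hx.1.le ht.1), ht.2⟩, htfix⟩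
      have hLt := le_csSup hSbdd htS
      have : x ≤ L := le_trans ht.1 hLt
      exact absurd this (not_le.2 hx.1)
    have hstep : ∀ x ∈ Ioc L b, Giso.symm x ∈ Ioo L x := by
      intro x hx
      set s := Giso.symm x with hs
      have hGs : G s = x := hGsymm x
      have hsb : s ≤ b := by
        by_contra hlt
        push_neg at hlt
        have : G b < G s := hGmono hlt
        rw [hGs] at this
        linarith [hx.2]
      have hsL : L < s := by
        by_contra hge
        push_neg at hge
        have : G s ≤ G L := hGmono.monotone hge
        rw [hGs, hLfix] at this
        exact absurd this (not_le.2 hx.1)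
      have hxs : s < x := by
        by_contra hle
        push_neg at hle
        have hsIoc : s ∈ Ioc L b := ⟨hsL, hsb⟩
        have := hpos s hsIoc
        rw [hGs] at this
        linarith
      exact ⟨hsL, hxs⟩
    have hy_mem : ∀ k : ℕ, y k ∈ Ioc L b := by
      intro k
      induction k with
      | zero => exact ⟨hLblt, le_refl b⟩
      | succ k ih =>
        rw [hystep]
        have := hstep (y k) ih
        exact ⟨this.1, le_trans this.2.le ih.2⟩
    have hy_dec : ∀ k : ℕ, y (k + 1) < y k := by
      intro k
      rw [hystep]
      exact (hstep (y k) (hy_mem k)).2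
    have hymono : StrictAnti y := strictAnti_nat_of_succ_lt hy_dec
    refine ⟨y, b - y 1, b - L, ?_, ?_, hy0, hyG, ?_⟩
    · have := hy_dec 0
      rw [hy0] at this
      linarith
    · linarith
    · intro k hk
      have h1 : y k ≤ y 1 := hymono.antitone hk
      have h2 : L < y k := (hy_mem k).1
      have h0 : y 1 < b := by
        have := hy_dec 0; rw [hy0] at this; exact this
      have habs : |b - y k| = b - y k := abs_of_nonneg (by linarith)
      rw [habs]
      constructor <;> linarith

/-- basic G facts packaged -/
lemma G_basic (F : ℝ → ℝ) (hFcont : Continuous F) (hFmono : StrictMono F)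
    (hF1 : ∀ x : ℝ, F (x + 1) = F x + 1) (p : ℤ) (q : ℕ) :
    Continuous (fun y : ℝ => F^[q] y - (p:ℝ)) ∧ StrictMono (fun y : ℝ => F^[q] y - (p:ℝ)) ∧
      (∀ x : ℝ, (fun y : ℝ => F^[q] y - (p:ℝ)) (x + 1) = (fun y : ℝ => F^[q] y - (p:ℝ)) x + 1) ∧
      Function.Surjective (fun y : ℝ => F^[q] y - (p:ℝ)) := by
  have hcont : Continuous (fun y : ℝ => F^[q] y - (p:ℝ)) :=
    (hFcont.iterate q).sub continuous_const
  have hmono : StrictMono (fun y : ℝ => F^[q] y - (p:ℝ)) := by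
    intro x y h
    have := (hFmono.iterate q) h
    simpa using this
  have h1 : ∀ x : ℝ, (fun y : ℝ => F^[q] y - (p:ℝ)) (x + 1)
      = (fun y : ℝ => F^[q] y - (p:ℝ)) x + 1 := by
    intro x
    simp only [iterate_add_one hF1 q x]
    ring
  exact ⟨hcont, hmono, h1, surjective_of_lift hcont hmono h1⟩

lemma lower_bound (f : Circle1 ≃ₜ Circle1) (F : ℝ → ℝ)
    (hFcont : Continuous F) (hFmono : StrictMono F)
    (hFlift : ∀ x : ℝ, f ((x : ℝ) : Circle1) = ((F x : ℝ) : Circle1))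
    (hF1 : ∀ x : ℝ, F (x + 1) = F x + 1) {p : ℤ} {q : ℕ} (hq : 0 < q)
    {a b : ℝ} (ha : F^[q] a = a + p) (hb : F^[q] b ≠ b + p) :
    ∃ ε₀ : ℝ, 0 < ε₀ ∧ ∀ n : ℕ, n + 1 ≤ coverNum (⇑f) (q * n + 1) univ ε₀ := by
  obtain ⟨hGcont, hGmono, hG1, hGsurj⟩ := G_basic F hFcont hFmono hF1 p q
  set G : ℝ → ℝ := fun y : ℝ => F^[q] y - (p:ℝ) with hG
  set Giso : ℝ ≃o ℝ := StrictMono.orderIsoOfSurjective G hGmono hGsurj with hGisodef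
  have hGiso : ∀ x : ℝ, Giso x = G x := by
    intro x
    rw [hGisodef, StrictMono.coe_orderIsoOfSurjective]
  have ha' : G a = a := by simp only [hG]; rw [ha]; ring
  have hb' : G b ≠ b := by
    simp only [hG]
    intro h
    exact hb (by linarith)
  obtain ⟨y, δ, D, hδ, hD, hy0, hyG, hsep⟩ :=
    exists_orbit_sep G hGcont Giso hGiso hG1 a b ha' hb'
  -- G^[i] (y j) = y (j - i) for i ≤ j
  have hGiter : ∀ (i j : ℕ), G^[i] (y (j + i)) = y j := by
    intro i
    induction i with
    | zero => intro j; simp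
    | succ i ih =>
      intro j
      have h1 : y (j + (i+1)) = y ((j + i) + 1) := by ring_nf
      rw [h1, Function.iterate_succ_apply, hyG (j + i), ih j]
  -- projection of F-iterates
  have hπrel : ∀ (k : ℕ) (x : ℝ), (⇑f)^[q * k] ((x : ℝ) : Circle1) = ((G^[k] x : ℝ) : Circle1) := by
    intro k x
    rw [lift_iterate f F hFlift (q * k) x]
    have h1 : G^[k] x = F^[q * k] x - (k * p : ℝ) := by
      have := iterate_G_eq hF1 p q k x
      simpa [hG] using this
    have h2 : F^[q * k] x = G^[k] x + ((k * p : ℤ) : ℝ) := by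
      rw [h1]; push_cast; ring
    rw [h2, circle_coe_add_int]
  set ε₀ : ℝ := min δ (1 - D) / 3 with hε₀
  have hminpos : 0 < min δ (1 - D) := lt_min hδ (by linarith)
  have hε₀pos : 0 < ε₀ := by rw [hε₀]; linarith
  refine ⟨ε₀, hε₀pos, fun n => ?_⟩
  -- key separation estimate
  have hkey : ∀ i ≤ n, ∀ j ≤ n, i < j →
      min δ (1 - D) ≤ dist ((⇑f)^[q * i] ((y i : ℝ) : Circle1))
        ((⇑f)^[q * i] ((y j : ℝ) : Circle1)) := by
    intro i hi j hj hij
    rw [hπrel i (y i), hπrel i (y j)]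
    have h1 : G^[i] (y i) = y 0 := by
      have := hGiter i 0
      simpa using this
    have h2 : G^[i] (y j) = y (j - i) := by
      have := hGiter i (j - i)
      rw [Nat.sub_add_cancel hij.le] at this
      exact this
    rw [h1, h2, hy0]
    have hji : 1 ≤ j - i := by omega
    obtain ⟨hs1, hs2⟩ := hsep (j - i) hji
    exact circle_dist_ge hs1 hs2 hD
  set T : Finset Circle1 := (Finset.range (n + 1)).image (fun k => ((y k : ℝ) : Circle1))
    with hT
  have hinj : Set.InjOn (fun k => ((y k : ℝ) : Circle1)) (Finset.range (n + 1)) := by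
    intro i hi j hj hij
    simp only [Finset.coe_range, Set.mem_Iio] at hi hj
    by_contra hne
    have hij' : ((y i : ℝ) : Circle1) = ((y j : ℝ) : Circle1) := hij
    rcases Nat.lt_or_ge i j with h | h
    · have := hkey i (by omega) j (by omega) h
      rw [hij'] at this
      simp only [dist_self] at this
      linarith
    · have hji : j < i := by omega
      have := hkey j (by omega) i (by omega) hji
      rw [hij'] at this
      simp only [dist_self] at this
      linarith
  have hTcard : T.card = n + 1 := by
    rw [hT, Finset.card_image_of_injOn hinj, Finset.card_range]
  have hsepT : ∀ u ∈ T, ∀ v ∈ T, u ≠ v → 2 * ε₀ < dynDist (⇑f) (q * n + 1) u v := by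
    intro u hu v hv huv
    rw [hT, Finset.mem_image] at hu hv
    obtain ⟨i, hi, rfl⟩ := hu
    obtain ⟨j, hj, rfl⟩ := hv
    rw [Finset.mem_range] at hi hj
    have hij : i ≠ j := fun h => huv (by rw [h])
    have key : min δ (1 - D) ≤ dynDist (⇑f) (q * n + 1) ((y i : ℝ) : Circle1) ((y j : ℝ) : Circle1) := by
      rcases Nat.lt_or_ge i j with h | h
      · calc min δ (1 - D) ≤ dist ((⇑f)^[q * i] ((y i : ℝ) : Circle1))
              ((⇑f)^[q * i] ((y j : ℝ) : Circle1)) := hkey i (by omega) j (by omega) h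
          _ ≤ dynDist (⇑f) (q * n + 1) _ _ := dist_le_dynDist (by nlinarith [hq])
      · have hji : j < i := by omega
        rw [dynDist_comm]
        calc min δ (1 - D) ≤ dist ((⇑f)^[q * j] ((y j : ℝ) : Circle1))
              ((⇑f)^[q * j] ((y i : ℝ) : Circle1)) := hkey j (by omega) i (by omega) hji
          _ ≤ dynDist (⇑f) (q * n + 1) _ _ := dist_le_dynDist (by nlinarith [hq])
    calc 2 * ε₀ < min δ (1 - D) := by rw [hε₀]; linarith
      _ ≤ _ := key
  calc n + 1 = T.card := hTcard.symm
    _ ≤ coverNum (⇑f) (q * n + 1) univ ε₀ := card_le_coverNum f.continuous hε₀pos hsepT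

lemma upper_bound (f : Circle1 ≃ₜ Circle1) (F : ℝ → ℝ)
    (hFcont : Continuous F) (hFmono : StrictMono F)
    (hFlift : ∀ x : ℝ, f ((x : ℝ) : Circle1) = ((F x : ℝ) : Circle1))
    (hF1 : ∀ x : ℝ, F (x + 1) = F x + 1) {p : ℤ} {q : ℕ} (hq : 0 < q)
    {a : ℝ} (ha : F^[q] a = a + p) :
    ∀ ε : ℝ, 0 < ε → ∃ C : ℕ, 1 ≤ C ∧
      ∀ n : ℕ, coverNum (⇑f) n univ ε ≤ C * (n + 1) := by
  classical
  intro ε hε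
  obtain ⟨hGcont, hGmono, hG1, hGsurj⟩ := G_basic F hFcont hFmono hF1 p q
  set G : ℝ → ℝ := fun y : ℝ => F^[q] y - (p:ℝ) with hG
  set Giso : ℝ ≃o ℝ := StrictMono.orderIsoOfSurjective G hGmono hGsurj with hGisodef
  have hGiso : ∀ x : ℝ, Giso x = G x := by
    intro x
    rw [hGisodef, StrictMono.coe_orderIsoOfSurjective]
  have ha' : G a = a := by simp only [hG]; rw [ha]; ring
  have ha1 : G (a + 1) = a + 1 := by rw [hG1, ha']
  have hπrel : ∀ (k : ℕ) (x : ℝ),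
      (⇑f)^[q * k] ((x : ℝ) : Circle1) = ((G^[k] x : ℝ) : Circle1) := by
    intro k x
    rw [lift_iterate f F hFlift (q * k) x]
    have h1 : G^[k] x = F^[q * k] x - (k * p : ℝ) := by
      have := iterate_G_eq hF1 p q k x
      simpa [hG] using this
    have h2 : F^[q * k] x = G^[k] x + ((k * p : ℤ) : ℝ) := by
      rw [h1]; push_cast; ring
    rw [h2, circle_coe_add_int]
  -- uniform continuity scale
  obtain ⟨δ, hδpos, hδ⟩ := exists_delta_dynDist (Z := Circle1) f.continuous hε q
  set m : ℕ := ⌈1 / δ⌉₊ + 1 with hm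
  have hmpos : (0:ℝ) < m := by
    rw [hm]; push_cast; positivity
  have hmδ : 1 / (m:ℝ) < δ := by
    have h1 : 1 / δ < (m:ℝ) := by
      rw [hm]; push_cast
      calc 1/δ ≤ (⌈1/δ⌉₊ : ℝ) := Nat.le_ceil _
        _ < ⌈1/δ⌉₊ + 1 := by linarith
    rw [div_lt_iff₀ hmpos]
    calc (1:ℝ) = δ * (1/δ) := by field_simp
      _ < δ * m := mul_lt_mul_of_pos_left h1 hδpos
  set d : ℕ → ℝ := fun j => a + j / m with hd
  have hfixk : ∀ k : ℕ, G^[k] a = a ∧ G^[k] (a + 1) = a + 1 := by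
    intro k
    induction k with
    | zero => exact ⟨rfl, rfl⟩
    | succ k ih =>
      constructor
      · rw [Function.iterate_succ_apply', ih.1, ha']
      · rw [Function.iterate_succ_apply', ih.2, ha1]
  have hGkmono : ∀ k : ℕ, StrictMono G^[k] := fun k => hGmono.iterate k
  have hmapsto : ∀ k : ℕ, ∀ x ∈ Icc a (a + 1), G^[k] x ∈ Icc a (a + 1) := by
    intro k x hx
    constructor
    · rw [← (hfixk k).1]; exact (hGkmono k).monotone hx.1
    · rw [← (hfixk k).2]; exact (hGkmono k).monotone hx.2
  have hGsymmiter : ∀ (k : ℕ) (t : ℝ), G^[k] ((⇑Giso.symm)^[k] t) = t := by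
    intro k t
    have hli : Function.LeftInverse G ⇑Giso.symm := by
      intro u
      rw [← hGiso]
      exact Giso.apply_symm_apply u
    exact (hli.iterate k) t
  have hrep : ∀ z : Circle1, ∃ x ∈ Ico a (a + 1), z = ((x : ℝ) : Circle1) := by
    intro z
    obtain ⟨x0, hx0⟩ := QuotientAddGroup.mk_surjective z
    refine ⟨a + Int.fract (x0 - a), ⟨by simp [Int.fract_nonneg], ?_⟩, ?_⟩
    · have := Int.fract_lt_one (x0 - a)
      linarith
    · have hxeq : a + Int.fract (x0 - a) + (⌊x0 - a⌋ : ℤ) = x0 := by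
        rw [Int.fract]
        push_cast
        ring
      rw [← hx0]
      calc (x0 : Circle1) = ((a + Int.fract (x0 - a) + (⌊x0 - a⌋ : ℤ) : ℝ) : Circle1) := by
            rw [hxeq]
        _ = ((a + Int.fract (x0 - a) : ℝ) : Circle1) := circle_coe_add_int _ _
  refine ⟨m + 1, by omega, fun n => ?_⟩
  -- centers for time scale n
  set P : Finset ℝ := ((Finset.range (n + 1)) ×ˢ (Finset.range (m + 1))).image
    (fun kj : ℕ × ℕ => (⇑Giso.symm)^[kj.1] (d kj.2)) with hP
  have haP : a ∈ P := by
    rw [hP, Finset.mem_image]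
    refine ⟨(0, 0), by simp, ?_⟩
    simp only [Function.iterate_zero, id_eq]
    simp [hd]
  have hclaim : ∀ x ∈ Icc a (a + 1), ∃ c ∈ P, c ∈ Icc a (a + 1) ∧ c ≤ x ∧
      ∀ k ≤ n, |G^[k] c - G^[k] x| ≤ 1 / m := by
    intro x hx
    set P' : Finset ℝ := P.filter (fun t => a ≤ t ∧ t ≤ x) with hP'
    have hP'ne : P'.Nonempty := ⟨a, by
      rw [hP', Finset.mem_filter]
      exact ⟨haP, le_refl a, hx.1⟩⟩
    set c : ℝ := P'.max' hP'ne with hc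
    have hcP' : c ∈ P' := P'.max'_mem hP'ne
    rw [hP', Finset.mem_filter] at hcP'
    obtain ⟨hcP, hac, hcx⟩ := hcP'
    have hcIcc : c ∈ Icc a (a + 1) := ⟨hac, le_trans hcx hx.2⟩
    refine ⟨c, hcP, hcIcc, hcx, ?_⟩
    intro k hk
    have hGcx : G^[k] c ≤ G^[k] x := (hGkmono k).monotone hcx
    rw [abs_of_nonpos (by linarith), neg_sub]
    by_contra hbig
    push_neg at hbig
    set u := G^[k] c with hu
    set v := G^[k] x with hv
    have humem : u ∈ Icc a (a + 1) := hmapsto k c hcIcc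
    have hvmem : v ∈ Icc a (a + 1) := hmapsto k x hx
    have huv : 1 / (m:ℝ) < v - u := hbig
    set j0 : ℕ := ⌊(u - a) * m⌋₊ + 1 with hj0
    have hj0R : (j0 : ℝ) = (⌊(u - a) * (m:ℝ)⌋₊ : ℝ) + 1 := by exact_mod_cast hj0
    have hfl : (u - a) * m < (j0 : ℝ) := by
      rw [hj0R]
      exact Nat.lt_floor_add_one _
    have hfl2 : (j0 : ℝ) ≤ (u - a) * m + 1 := by
      rw [hj0R]
      have := Nat.floor_le (by nlinarith [humem.1, hmpos] : (0:ℝ) ≤ (u - a) * m)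
      linarith
    have hj0u : u < d j0 := by
      rw [hd]
      have : u - a < (j0 : ℝ) / m := (lt_div_iff₀ hmpos).2 (by linarith)
      linarith
    have hj0v : d j0 < v := by
      rw [hd]
      have h1 : (1:ℝ) < (v - u) * m := (div_lt_iff₀ hmpos).1 huv
      have h2 : (j0 : ℝ) < (v - a) * m := by nlinarith
      have : (j0 : ℝ) / m < v - a := (div_lt_iff₀ hmpos).2 h2
      linarith
    have hj0m : j0 ≤ m := by
      have h1 : d j0 < a + 1 := lt_of_lt_of_le hj0v hvmem.2
      rw [hd] at h1
      have h2 : (j0 : ℝ) / m < 1 := by linarith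
      have h3 : (j0 : ℝ) < m := by
        rw [div_lt_iff₀ hmpos] at h2
        linarith
      exact_mod_cast h3.le
    set e : ℝ := (⇑Giso.symm)^[k] (d j0) with he
    have heP : e ∈ P := by
      rw [hP, Finset.mem_image]
      refine ⟨(k, j0), ?_, rfl⟩
      rw [Finset.mem_product, Finset.mem_range, Finset.mem_range]
      exact ⟨by omega, by omega⟩
    have hGke : G^[k] e = d j0 := hGsymmiter k (d j0)
    have hce : c < e := by
      have : G^[k] c < G^[k] e := by rw [hGke]; exact hj0u
      exact (hGkmono k).lt_iff_lt.1 this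
    have hex : e < x := by
      have : G^[k] e < G^[k] x := by rw [hGke]; exact hj0v
      exact (hGkmono k).lt_iff_lt.1 this
    have heP' : e ∈ P' := by
      rw [hP', Finset.mem_filter]
      exact ⟨heP, le_trans hac hce.le, hex.le⟩
    have := P'.le_max' e heP'
    rw [← hc] at this
    linarith
  -- the circle cover
  set s : Finset Circle1 := P.image (fun t : ℝ => ((t : ℝ) : Circle1)) with hs
  have hcov : (univ : Set Circle1) ⊆
      ⋃ c ∈ s, {z : Circle1 | dynDist (⇑f) (q * (n + 1)) c z ≤ ε} := by
    intro z _
    obtain ⟨x, hxIco, rfl⟩ := hrep z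
    obtain ⟨c, hcP, hcIcc, hcx, hcest⟩ := hclaim x (Ico_subset_Icc_self hxIco)
    rw [mem_iUnion₂]
    refine ⟨((c : ℝ) : Circle1), ?_, ?_⟩
    · rw [hs, Finset.mem_image]
      exact ⟨c, hcP, rfl⟩
    · rw [mem_setOf_eq, dynDist_le_iff hε.le]
      intro i hi
      set k : ℕ := i / q with hk
      set r : ℕ := i % q with hr
      have hdm := Nat.div_add_mod i q
      have hkn : k ≤ n := by
        have : i / q < n + 1 := Nat.div_lt_iff_lt_mul hq |>.2 (by
          calc i < q * (n + 1) := hi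
            _ = (n + 1) * q := by ring)
        omega
      have hrq : r < q := Nat.mod_lt _ hq
      have hieq : r + q * k = i := by
        rw [hk, hr, add_comm]
        exact hdm
      have hrw : ∀ t : ℝ, (⇑f)^[i] ((t : ℝ) : Circle1)
          = (⇑f)^[r] (((G^[k] t : ℝ) : Circle1)) := by
        intro t
        rw [← hieq, Function.iterate_add_apply, hπrel k t]
      rw [hrw c, hrw x]
      have hdist : dist ((G^[k] c : ℝ) : Circle1) ((G^[k] x : ℝ) : Circle1) < δ := by
        calc dist ((G^[k] c : ℝ) : Circle1) ((G^[k] x : ℝ) : Circle1)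
            ≤ |G^[k] c - G^[k] x| := circle_dist_le _ _
          _ ≤ 1 / m := hcest k hkn
          _ < δ := hmδ
      have := hδ _ _ hdist
      exact le_trans (dist_le_dynDist hrq) this
  have hcard : s.card ≤ (m + 1) * (n + 1) := by
    calc s.card ≤ P.card := Finset.card_image_le
      _ ≤ ((Finset.range (n + 1)) ×ˢ (Finset.range (m + 1))).card := Finset.card_image_le
      _ = (n + 1) * (m + 1) := by
          rw [Finset.card_product, Finset.card_range, Finset.card_range]
      _ = (m + 1) * (n + 1) := by ring
  have hmain : coverNum (⇑f) (q * (n + 1)) univ ε ≤ (m + 1) * (n + 1) :=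
    le_trans (coverNum_le_card hcov) hcard
  calc coverNum (⇑f) n univ ε ≤ coverNum (⇑f) (q * (n + 1)) univ ε := by
        apply coverNum_mono_n f.continuous hε
        calc n ≤ n + 1 := Nat.le_succ n
          _ ≤ q * (n + 1) := Nat.le_mul_of_pos_left (n + 1) hq
    _ ≤ (m + 1) * (n + 1) := hmain

/-- Orientation-preserving circle homeomorphism with rational rotation number,
not conjugate to a rotation: its polynomial entropy equals 1. -/
theorem hpol_circle_homeo_rational (f : Circle1 ≃ₜ Circle1)
    (F : ℝ → ℝ) (hFcont : Continuous F) (hFmono : StrictMono F)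
    (hFlift : ∀ x : ℝ, f ((x : ℝ) : Circle1) = ((F x : ℝ) : Circle1))
    (ρ : ℝ)
    (hρ : ∀ x : ℝ, Filter.Tendsto (fun n : ℕ => F^[n] x / n) Filter.atTop (nhds ρ))
    (hρnat : ∃ q : ℚ, ρ = (q : ℝ))
    (hnconj : ¬ ConjRotCircle f) :
    hpol (⇑f) = 1 := by
  obtain ⟨qr, hqr⟩ := hρnat
  set q : ℕ := qr.den with hqdef
  set p : ℤ := qr.num with hpdef
  have hq : 0 < q := qr.pos
  have hpq : ρ = (p : ℝ) / q := by
    rw [hqr, hpdef, hqdef, Rat.cast_def]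
  have hF1 : ∀ x : ℝ, F (x + 1) = F x + 1 :=
    lift_add_one_eq f F hFcont hFmono hFlift ρ hρ
  obtain ⟨a, ha⟩ := exists_fixed_point hFcont hF1 hρ hq hpq
  by_cases hper : ∀ x : ℝ, F^[q] x = x + p
  · exact absurd (conj_of_periodic f F hFcont hFmono hFlift hF1 hq hper) hnconj
  · push_neg at hper
    obtain ⟨b, hb⟩ := hper
    apply hpol_eq_one_of_bounds (⇑f) f.continuous
    · exact upper_bound f F hFcont hFmono hFlift hF1 hq ha
    · obtain ⟨ε₀, hε₀, hlow⟩ := lower_bound f F hFcont hFmono hFlift hF1 hq ha hb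
      refine ⟨ε₀, hε₀, 1 / (2 * q), by positivity, ?_⟩
      filter_upwards [eventually_ge_atTop (q + 1)] with N hN
      set n : ℕ := (N - 1) / q with hn
      have hdm := Nat.div_add_mod (N - 1) q
      have hmod := Nat.mod_lt (N - 1) hq
      have h1 : q * n + 1 ≤ N := by
        have h := Nat.div_mul_le_self (N - 1) q
        have h' : q * n ≤ N - 1 := by
          rw [hn, Nat.mul_comm]
          exact h
        omega
      have h4 : N ≤ q * (n + 1) := by
        have he : q * (n + 1) = q * n + q := by ring
        rw [he, hn]
        omega
      have h2 : n + 1 ≤ coverNum (⇑f) (q * n + 1) univ ε₀ := hlow n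
      have h3 : coverNum (⇑f) (q * n + 1) univ ε₀ ≤ coverNum (⇑f) N univ ε₀ :=
        coverNum_mono_n f.continuous hε₀ h1
      have h5 : (N : ℝ) * (1 / (2 * q)) ≤ (n + 1 : ℕ) := by
        have hqR : (0:ℝ) < q := by exact_mod_cast hq
        have h4R : (N : ℝ) ≤ q * (n + 1) := by exact_mod_cast h4
        have hnn : (0:ℝ) ≤ (n:ℝ) + 1 := by positivity
        rw [mul_one_div, div_le_iff₀ (by positivity)]
        push_cast
        nlinarith
      calc (N : ℝ) * (1 / (2 * q)) ≤ (n + 1 : ℕ) := h5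
        _ ≤ coverNum (⇑f) N univ ε₀ := by exact_mod_cast le_trans h2 h3
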